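/- Let A₀ be a real p×n matrix, let q ∈ ℝⁿ be a row vector, and let c₁ ≥ 0 be a real constant. Let A₁ be the (p+2)×n matrix obtained by stacking the rows of A₀ together with the rows q and c₁·q, and let A₂ be the (p+1)×n matrix obtained by stacking the rows of A₀ together with the row √(1+c₁²)·q. Then A₁ᵀA₁ = A₂ᵀA₂ and ‖A₁‖₂ = ‖A₂‖₂; consequently, if these matrices have full column rank n, then for every query w ∈ ℝⁿ, ‖A₁‖₂² · wᵀ(A₁ᵀA₁)⁻¹w = ‖A₂‖₂² · wᵀ(A₂ᵀA₂)⁻¹w, i.e., the two strategies are equivalent under the (ε,δ)-matrix mechanism. -/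

import Mathlib

open Matrix BigOperators

/-- The maximum Euclidean (L2) column norm of a matrix (its L2 sensitivity). -/
noncomputable def l2Sens {ι : Type*} [Fintype ι] {n : ℕ} (A : Matrix ι (Fin n) ℝ) : ℝ :=
  ⨆ j, Real.sqrt (∑ i, (A i j) ^ 2)

/-- **Redundant queries under the (ε,δ)-matrix mechanism.**
Stacking a query `q` and a scaled copy `c₁ • q` onto a strategy `A₀` is equivalent to
stacking the single row `√(1+c₁²) • q`: the two strategies have equal Gram matrices and
equal L2 sensitivity, hence (when full column rank) equal error on every query. -/
theorem redundant_queries_equivalent (p n : ℕ)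
    (A₀ : Matrix (Fin p) (Fin n) ℝ) (q : Fin n → ℝ) (c₁ : ℝ) (hc₁ : 0 ≤ c₁)
    (A₁ : Matrix (Fin p ⊕ Fin 2) (Fin n) ℝ)
    (A₂ : Matrix (Fin p ⊕ Fin 1) (Fin n) ℝ)
    (hA₁ : A₁ = Matrix.of (Sum.elim A₀ ![q, c₁ • q]))
    (hA₂ : A₂ = Matrix.of (Sum.elim A₀ ![Real.sqrt (1 + c₁ ^ 2) • q])) :
    A₁ᵀ * A₁ = A₂ᵀ * A₂ ∧
    l2Sens A₁ = l2Sens A₂ ∧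
    (A₁.rank = n → A₂.rank = n → ∀ w : Fin n → ℝ,
      (l2Sens A₁) ^ 2 * (w ⬝ᵥ ((A₁ᵀ * A₁)⁻¹).mulVec w)
        = (l2Sens A₂) ^ 2 * (w ⬝ᵥ ((A₂ᵀ * A₂)⁻¹).mulVec w)) := by
  have hsq : Real.sqrt (1 + c₁ ^ 2) ^ 2 = 1 + c₁ ^ 2 :=
    Real.sq_sqrt (by positivity)
  have hG : A₁ᵀ * A₁ = A₂ᵀ * A₂ := by
    ext j k
    simp only [hA₁, hA₂, mul_apply, transpose_apply, Matrix.of_apply,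
      Fintype.sum_sum_type, Fin.sum_univ_two, Fin.sum_univ_one,
      Sum.elim_inl, Sum.elim_inr, Matrix.cons_val_zero, Matrix.cons_val_one,
      Matrix.head_cons, Pi.smul_apply, smul_eq_mul]
    dsimp only [Sum.elim]
    simp only [Matrix.cons_val_zero, Matrix.cons_val_one, Matrix.head_cons, Pi.smul_apply, smul_eq_mul]
    have h : Real.sqrt (1 + c₁ ^ 2) * q j * (Real.sqrt (1 + c₁ ^ 2) * q k)
        = (1 + c₁ ^ 2) * (q j * q k) := by
      rw [show Real.sqrt (1 + c₁ ^ 2) * q j * (Real.sqrt (1 + c₁ ^ 2) * q k)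
          = Real.sqrt (1 + c₁ ^ 2) ^ 2 * (q j * q k) from by ring, hsq]
    rw [h]; ring
  have hcol : ∀ {ι : Type} [Fintype ι] (A : Matrix ι (Fin n) ℝ) (j : Fin n),
      (∑ i, (A i j) ^ 2) = (Aᵀ * A) j j := by
    intro ι _ A j
    simp [mul_apply, transpose_apply, sq]
  have hS : l2Sens A₁ = l2Sens A₂ := by
    unfold l2Sens
    congr 1
    funext j
    rw [hcol A₁ j, hcol A₂ j, hG]
  exact ⟨hG, hS, fun _ _ w => by rw [hG, hS]⟩
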